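/- Let a ≥ 2 and let M₁, …, M_a ⊆ M₀ be pairwise disjoint, finite, nonempty, simple and bound sets such that Θ(Mᵢ, M̃ᵢ) = Θ(Mᵢ, Mᵢ₊₁) for every i ∈ {1, …, a−1} (as holds when each Mᵢ₊₁ is adjacent to Mᵢ), and such that Ξ(M₁) ≥ Ξ(Mⱼ) for all j ∈ {2, …, a−1}. Then Θ(M₁, M̃₁) ≥ Θ(Mᵢ, M̃ᵢ) for all i ∈ {2, …, a−1}. -/

import Mathlib

open Set Filter Metric
open scoped RealInnerProductSpace

noncomputable section

/-- Euclidean space `ℝ^d`. -/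
abbrev Eucl (d : ℕ) : Type := EuclideanSpace ℝ (Fin d)

/-- The communication height `Θ(x, y)` between two points. -/
def commHeight {d : ℕ} (U : Eucl d → ℝ) (x y : Eucl d) : ℝ :=
  ⨅ γ : Path x y, ⨆ t : unitInterval, U (γ t)

/-- The communication height `Θ(A, B)` between two sets, `+∞` if one is empty. -/
def commHeightSet {d : ℕ} (U : Eucl d → ℝ) (A B : Set (Eucl d)) : EReal :=
  ⨅ x ∈ A, ⨅ y ∈ B, (commHeight U x y : EReal)

/-- `M̃`: the local minima of `U` outside `M` of height at most `c = U(M)`. -/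
def tildeSet {d : ℕ} (U : Eucl d → ℝ) (M : Set (Eucl d)) (c : ℝ) : Set (Eucl d) :=
  {m' | IsLocalMin U m' ∧ m' ∉ M ∧ U m' ≤ c}

/-- `Ξ(M) = Θ(M, M̃) − U(M) ∈ (0, ∞]`. -/
def XiSet {d : ℕ} (U : Eucl d → ℝ) (M : Set (Eucl d)) (c : ℝ) : EReal :=
  commHeightSet U M (tildeSet U M c) - (c : EReal)

/-- `M` (simple, common value `c`) is bound. -/
def IsBound {d : ℕ} (U : Eucl d → ℝ) (M : Set (Eucl d)) (c : ℝ) : Prop :=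
  (∃ m, M = {m}) ∨
    ∀ m ∈ M, ∀ m' ∈ M, (commHeight U m m' : EReal) < commHeightSet U M (tildeSet U M c)

/-- `A` is a connected component of `S`. -/
def IsCompOf {d : ℕ} (S A : Set (Eucl d)) : Prop :=
  ∃ x ∈ S, A = connectedComponentIn S x

/-- The Hessian matrix of `U` at `x`. -/
def hessMat {d : ℕ} (U : Eucl d → ℝ) (x : Eucl d) : Matrix (Fin d) (Fin d) ℝ :=
  Matrix.of fun i j =>
    iteratedFDeriv ℝ 2 U x ![EuclideanSpace.single i (1 : ℝ), EuclideanSpace.single j (1 : ℝ)]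

/-- `σ` is a saddle point of `U`. -/
def IsSaddle {d : ℕ} (U : Eucl d → ℝ) (σ : Eucl d) : Prop :=
  gradient U σ = 0 ∧
    ∃ hH : (hessMat U σ).IsHermitian,
      IsUnit (hessMat U σ).det ∧ ∃! i, hH.eigenvalues i < 0

/-- `x ↷ y` : heteroclinic orbit of `ẋ = b(x)` from `x` to `y`. -/
def Hetero {d : ℕ} (b : Eucl d → Eucl d) (x y : Eucl d) : Prop :=
  ∃ φ : ℝ → Eucl d,
    (∀ t, HasDerivAt φ (b (φ t)) t) ∧
      Tendsto φ atBot (nhds x) ∧ Tendsto φ atTop (nhds y)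

/-- `σ ↝ m`. -/
def ConnectsTo {d : ℕ} (U : Eucl d → ℝ) (b : Eucl d → Eucl d) (σ m : Eucl d) : Prop :=
  Hetero b σ m ∨
    ∃ (k : ℕ) (_ : 0 < k) (σs : Fin k → Eucl d) (ms : Fin (k + 1) → Eucl d),
      (∀ i, IsSaddle U (σs i)) ∧ (∀ i, U (σs i) < U σ) ∧
        (∀ i : Fin k, IsLocalMin U (ms i.castSucc)) ∧
        ms (Fin.last k) = m ∧ Hetero b σ (ms 0) ∧
        ∀ i : Fin k, Hetero b (σs i) (ms i.castSucc) ∧ Hetero b (σs i) (ms i.succ)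

/-- `σ ↝ M`. -/
def ConnectsToSet {d : ℕ} (U : Eucl d → ℝ) (b : Eucl d → Eucl d) (σ : Eucl d)
    (M : Set (Eucl d)) : Prop :=
  ∃ m ∈ M, ConnectsTo U b σ m

/-- `σ ↷ M`. -/
def HeteroToSet {d : ℕ} (b : Eucl d → Eucl d) (σ : Eucl d) (M : Set (Eucl d)) : Prop :=
  ∃ m ∈ M, Hetero b σ m

/-- `M →_σ M'`. -/
def AdjacentVia {d : ℕ} (U : Eucl d → ℝ) (b : Eucl d → Eucl d) (M M' : Set (Eucl d))
    (c : ℝ) (σ : Eucl d) : Prop :=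
  IsSaddle U σ ∧ ConnectsToSet U b σ M ∧ HeteroToSet b σ M' ∧
    (U σ : EReal) = commHeightSet U M (tildeSet U M c) ∧
    (U σ : EReal) = commHeightSet U M M'

/-- Unstable-manifold property. -/
def UnstableManifoldProperty {d : ℕ} (U : Eucl d → ℝ) (b : Eucl d → Eucl d) : Prop :=
  ∀ σ : Eucl d, IsSaddle U σ →
    ∃ r' > (0 : ℝ), ∃ Ap Am : Set (Eucl d),
      Ap ≠ Am ∧
      IsCompOf (ball σ r' ∩ {x | U x < U σ}) Ap ∧
      IsCompOf (ball σ r' ∩ {x | U x < U σ}) Am ∧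
      (∀ C, IsCompOf (ball σ r' ∩ {x | U x < U σ}) C → C = Ap ∨ C = Am) ∧
      ∃ mp mm : Eucl d, IsLocalMin U mp ∧ IsLocalMin U mm ∧
        ∃ tp tm : ℝ, ∃ φp φm : ℝ → Eucl d,
          (∀ t, HasDerivAt φp (b (φp t)) t) ∧ (∀ t, HasDerivAt φm (b (φm t)) t) ∧
          Tendsto φp atBot (nhds σ) ∧ Tendsto φp atTop (nhds mp) ∧
          Tendsto φm atBot (nhds σ) ∧ Tendsto φm atTop (nhds mm) ∧
          φp '' Iic tp ⊆ Ap ∧ φm '' Iic tm ⊆ Am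


section AuxCH

variable {d : ℕ} {U : Eucl d → ℝ} {A B B' : Set (Eucl d)}

instance pathNonemptyCH (x y : Eucl d) : Nonempty (Path x y) :=
  ⟨PathConnectedSpace.somePath x y⟩

lemma le_sup_path (hUc : Continuous U) {x y : Eucl d} (γ : Path x y) (t : unitInterval) :
    U (γ t) ≤ ⨆ t : unitInterval, U (γ t) :=
  le_ciSup ((isCompact_range (hUc.comp γ.continuous)).bddAbove) t

lemma left_le_commHeight (hUc : Continuous U) (x y : Eucl d) : U x ≤ commHeight U x y := by
  refine le_ciInf fun γ => ?_
  have := le_sup_path hUc γ 0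
  rwa [γ.source] at this

lemma bddBelow_sups (hUc : Continuous U) (x y : Eucl d) :
    BddBelow (Set.range fun γ : Path x y => ⨆ t : unitInterval, U (γ t)) := by
  refine ⟨U x, ?_⟩
  rintro _ ⟨γ, rfl⟩
  have := le_sup_path hUc γ 0
  simpa [γ.source] using this

lemma sup_symm {x y : Eucl d} (γ : Path x y) :
    (⨆ t : unitInterval, U (γ.symm t)) = ⨆ t : unitInterval, U (γ t) := by
  have h : (Set.range fun t => U (γ.symm t)) = Set.range fun t => U (γ t) := by
    ext v
    constructor
    · rintro ⟨t, rfl⟩; exact ⟨unitInterval.symm t, rfl⟩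
    · rintro ⟨t, rfl⟩
      exact ⟨unitInterval.symm t, by simp [Path.symm, unitInterval.symm_symm]⟩
  simp only [iSup, h]

lemma commHeight_symm_le (hUc : Continuous U) (x y : Eucl d) :
    commHeight U x y ≤ commHeight U y x := by
  refine le_ciInf fun γ => ?_
  calc commHeight U x y ≤ ⨆ t : unitInterval, U (γ.symm t) :=
        ciInf_le (bddBelow_sups hUc x y) γ.symm
    _ = _ := sup_symm γ

lemma commHeight_symm (hUc : Continuous U) (x y : Eucl d) :
    commHeight U x y = commHeight U y x :=
  le_antisymm (commHeight_symm_le hUc x y) (commHeight_symm_le hUc y x)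

lemma commHeight_self_le (hUc : Continuous U) (x : Eucl d) : commHeight U x x ≤ U x := by
  refine (ciInf_le (bddBelow_sups hUc x x) (Path.refl x)).trans ?_
  simp [ciSup_const]

lemma commHeight_triangle (hUc : Continuous U) (x y z : Eucl d) :
    commHeight U x z ≤ max (commHeight U x y) (commHeight U y z) := by
  by_contra h
  push_neg at h
  obtain ⟨γ₁, h₁⟩ := exists_lt_of_ciInf_lt (lt_of_le_of_lt (le_max_left _ _) h :
    commHeight U x y < commHeight U x z)
  obtain ⟨γ₂, h₂⟩ := exists_lt_of_ciInf_lt (lt_of_le_of_lt (le_max_right _ _) h :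
    commHeight U y z < commHeight U x z)
  have h3 : commHeight U x z ≤ ⨆ t : unitInterval, U ((γ₁.trans γ₂) t) :=
    ciInf_le (bddBelow_sups hUc x z) (γ₁.trans γ₂)
  have hle : (⨆ t : unitInterval, U ((γ₁.trans γ₂) t)) ≤
      max (⨆ t : unitInterval, U (γ₁ t)) (⨆ t : unitInterval, U (γ₂ t)) := by
    refine ciSup_le fun t => ?_
    have ht : (γ₁.trans γ₂) t ∈ Set.range ⇑γ₁ ∪ Set.range ⇑γ₂ := by
      rw [← Path.trans_range]; exact ⟨t, rfl⟩
    rcases ht with ⟨s, hs⟩ | ⟨s, hs⟩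
    · exact le_max_of_le_left (hs ▸ le_sup_path hUc γ₁ s)
    · exact le_max_of_le_right (hs ▸ le_sup_path hUc γ₂ s)
  exact absurd (h3.trans hle) (not_le.2 (max_lt h₁ h₂))

lemma commHeightSet_le {x y : Eucl d} (hx : x ∈ A) (hy : y ∈ B) :
    commHeightSet U A B ≤ (commHeight U x y : EReal) :=
  (iInf₂_le x hx).trans (iInf₂_le y hy)

lemma le_commHeightSet {c : EReal} (h : ∀ x ∈ A, ∀ y ∈ B, c ≤ (commHeight U x y : EReal)) :
    c ≤ commHeightSet U A B :=
  le_iInf₂ fun x hx => le_iInf₂ fun y hy => h x hx y hy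

lemma commHeightSet_mono (h : B' ⊆ B) : commHeightSet U A B ≤ commHeightSet U A B' :=
  le_commHeightSet fun x hx y hy => commHeightSet_le hx (h hy)

lemma commHeightSet_symm (hUc : Continuous U) (A B : Set (Eucl d)) :
    commHeightSet U A B = commHeightSet U B A := by
  have key : ∀ C D : Set (Eucl d), commHeightSet U C D ≤ commHeightSet U D C := by
    intro C D
    refine le_commHeightSet fun y hy x hx => ?_
    rw [show commHeight U y x = commHeight U x y from commHeight_symm hUc y x]
    exact commHeightSet_le hx hy
  exact le_antisymm (key A B) (key B A)

lemma commHeightSet_attained (hA : A.Finite) (hAne : A.Nonempty)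
    (hB : B.Finite) (hBne : B.Nonempty) :
    ∃ x ∈ A, ∃ y ∈ B, commHeightSet U A B = (commHeight U x y : EReal) := by
  obtain ⟨p, hp, hmin⟩ := Set.exists_min_image (A ×ˢ B)
    (fun p => commHeight U p.1 p.2) (hA.prod hB) (hAne.prod hBne)
  refine ⟨p.1, hp.1, p.2, hp.2, le_antisymm (commHeightSet_le hp.1 hp.2) ?_⟩
  exact le_commHeightSet fun x hx y hy => EReal.coe_le_coe_iff.2 (hmin (x, y) ⟨hx, hy⟩)

end AuxCH

theorem statement5 {d : ℕ} (hd : 1 ≤ d)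
    (U : Eucl d → ℝ) (hUc : Continuous U)
    (a : ℕ) (ha : 2 ≤ a)
    (ms : Fin a → Set (Eucl d)) (cs : Fin a → ℝ)
    (hdisj : ∀ i j, i ≠ j → Disjoint (ms i) (ms j))
    (hfin : ∀ i, (ms i).Finite) (hne : ∀ i, (ms i).Nonempty)
    (hloc : ∀ i, ∀ m ∈ ms i, IsLocalMin U m)
    (hsimple : ∀ i, ∀ m ∈ ms i, U m = cs i)
    (hbound : ∀ i, IsBound U (ms i) (cs i))
    (hadj : ∀ i : Fin a, (hia : i.1 + 1 < a) →
      commHeightSet U (ms i) (tildeSet U (ms i) (cs i)) =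
        commHeightSet U (ms i) (ms ⟨i.1 + 1, hia⟩))
    (hXi : ∀ j : Fin a, 1 ≤ j.1 → j.1 + 1 < a →
      XiSet U (ms j) (cs j) ≤ XiSet U (ms ⟨0, by omega⟩) (cs ⟨0, by omega⟩))
 :
    ∀ i : Fin a, 1 ≤ i.1 → i.1 + 1 < a →
      commHeightSet U (ms i) (tildeSet U (ms i) (cs i)) ≤
        commHeightSet U (ms ⟨0, by omega⟩)
          (tildeSet U (ms ⟨0, by omega⟩) (cs ⟨0, by omega⟩)) := by
  intro i hi1 hi2
  set i0 : Fin a := ⟨0, by omega⟩ with hi0def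
  set T0 := commHeightSet U (ms i0) (tildeSet U (ms i0) (cs i0)) with hT0def
  show commHeightSet U (ms i) (tildeSet U (ms i) (cs i)) ≤ T0
  by_cases hTtop : T0 = ⊤
  · rw [hTtop]; exact le_top
  -- T0 is a real number
  have hc0le : (cs i0 : EReal) ≤ T0 := by
    refine le_commHeightSet fun x hx y hy => ?_
    exact_mod_cast (hsimple i0 x hx ▸ left_le_commHeight hUc x y)
  have hTbot : T0 ≠ ⊥ := fun h => by simp [h] at hc0le
  obtain ⟨t0, ht0⟩ : ∃ t0 : ℝ, T0 = (t0 : EReal) :=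
    ⟨T0.toReal, (EReal.coe_toReal hTtop hTbot).symm⟩
  have hc0t0 : cs i0 ≤ t0 := by rw [ht0] at hc0le; exact_mod_cast hc0le
  have key : ∀ n : ℕ, (hn1 : n + 1 < a) →
      commHeightSet U (ms ⟨n, by omega⟩) (tildeSet U (ms ⟨n, by omega⟩) (cs ⟨n, by omega⟩)) ≤ T0
        ∧ commHeightSet U (ms ⟨n, by omega⟩) (ms i0) ≤ T0 := by
    intro n
    induction n with
    | zero =>
      intro hn1
      constructor
      · exact le_rfl
      · obtain ⟨m, hm⟩ := hne i0
        refine (commHeightSet_le hm hm).trans ?_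
        rw [ht0]
        have h1 : commHeight U m m ≤ cs i0 := (hsimple i0 m hm) ▸ commHeight_self_le hUc m
        exact_mod_cast h1.trans hc0t0
    | succ n IH =>
      intro hn1
      have hna : n + 1 < a := by omega
      obtain ⟨IH1, IH2⟩ := IH hna
      set i' : Fin a := ⟨n, by omega⟩ with hi'def
      set j : Fin a := ⟨n + 1, hna⟩ with hjdef
      have hadji : commHeightSet U (ms i') (tildeSet U (ms i') (cs i')) =
          commHeightSet U (ms i') (ms j) := hadj i' hna
      -- attained witnesses
      obtain ⟨u, hu, v, hv, huv⟩ := commHeightSet_attained (U := U)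
        (hfin j) (hne j) (hfin i') (hne i')
      obtain ⟨p, hp, q, hq, hpq⟩ := commHeightSet_attained (U := U)
        (hfin i') (hne i') (hfin i0) (hne i0)
      have huv_le : commHeight U u v ≤ t0 := by
        have : (commHeight U u v : EReal) ≤ (t0 : EReal) := by
          rw [← huv, commHeightSet_symm hUc, ← hadji, ← ht0]; exact IH1
        exact_mod_cast this
      have hpq_le : commHeight U p q ≤ t0 := by
        have : (commHeight U p q : EReal) ≤ (t0 : EReal) := by
          rw [← hpq, ← ht0]; exact IH2
        exact_mod_cast this
      have hcile : (cs i' : EReal) ≤ commHeightSet U (ms i') (tildeSet U (ms i') (cs i')) := by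
        refine le_commHeightSet fun x hx y hy => ?_
        exact_mod_cast (hsimple i' x hx ▸ left_le_commHeight hUc x y)
      have hvp_le : commHeight U v p ≤ t0 := by
        rcases hbound i' with ⟨m, hm⟩ | hb
        · have hv' : v = m := by rwa [hm, Set.mem_singleton_iff] at hv
          have hp' : p = m := by rwa [hm, Set.mem_singleton_iff] at hp
          rw [hv', hp']
          have hmm : m ∈ ms i' := by rw [hm]; exact Set.mem_singleton m
          have h1 : commHeight U m m ≤ cs i' := (hsimple i' m hmm) ▸ commHeight_self_le hUc m
          have h2 : (cs i' : EReal) ≤ (t0 : EReal) := hcile.trans (ht0 ▸ IH1)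
          exact h1.trans (by exact_mod_cast h2)
        · have h1 : (commHeight U v p : EReal) < (t0 : EReal) :=
            (hb v hv p hp).trans_le (ht0 ▸ IH1)
          exact_mod_cast h1.le
      have huq_le : commHeight U u q ≤ t0 := by
        calc commHeight U u q ≤ max (commHeight U u v) (commHeight U v q) :=
              commHeight_triangle hUc u v q
          _ ≤ max (commHeight U u v) (max (commHeight U v p) (commHeight U p q)) :=
              max_le_max le_rfl (commHeight_triangle hUc v p q)
          _ ≤ t0 := max_le huv_le (max_le hvp_le hpq_le)
      have goalA : commHeightSet U (ms j) (ms i0) ≤ T0 := by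
        refine (commHeightSet_le hu hq).trans ?_
        rw [ht0]; exact_mod_cast huq_le
      refine ⟨?_, goalA⟩
      -- goal B
      by_cases hc : cs j ≤ cs i0
      · have hx := hXi j (Nat.le_add_left 1 n) hn1
        simp only [XiSet] at hx
        have hx' : commHeightSet U (ms j) (tildeSet U (ms j) (cs j)) - (cs j : EReal) ≤
            ((t0 - cs i0 : ℝ) : EReal) := by
          rw [EReal.coe_sub, ← ht0]
          exact hx
        have hx'' := (EReal.sub_le_iff_le_add (Or.inl (EReal.coe_ne_bot _))
          (Or.inl (EReal.coe_ne_top _))).1 hx'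
        rw [← EReal.coe_add] at hx''
        refine hx''.trans ?_
        rw [ht0]
        exact_mod_cast by linarith
      · push_neg at hc
        have hsub : ms i0 ⊆ tildeSet U (ms j) (cs j) := by
          intro x hx
          refine ⟨hloc i0 x hx, ?_, ?_⟩
          · intro hmem
            have hij : i0 ≠ j := by
              intro h
              have := congrArg Fin.val h
              simp [hi0def, hjdef] at this
            exact (Set.disjoint_left.1 (hdisj i0 j hij) hx) hmem
          · rw [hsimple i0 x hx]; exact hc.le
        exact (commHeightSet_mono hsub).trans goalA
  have hkey := (key i.1 hi2).1
  have hieq : (⟨i.1, by omega⟩ : Fin a) = i := by ext; rfl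
  rw [hieq] at hkey
  exact hkey


end
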